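/- Let S be a numerical monoid. Then P_fin,0(S) has no absolutely irreducible elements: for every atom A of P_fin,0(S) there exists N ∈ ℕ such that the N-fold sumset NA admits a factorization into atoms of P_fin,0(S) that is not (as a multiset of atoms) equal to N copies of A; i.e., there is a finite multiset of atoms of P_fin,0(S) whose sum is NA and which differs from the multiset consisting of A taken N times. -/

import Mathlib

open Pointwise

/-- The restricted power monoid `P_fin,0(S)`: finite subsets of `S` containing `0`. -/
def Pfin0 (S : AddSubmonoid ℕ) : Set (Finset ℕ) :=
  {A | 0 ∈ A ∧ (A : Set ℕ) ⊆ (S : Set ℕ)}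

/-- Atoms of `P_fin,0(S)`. -/
def IsAtom0 (S : AddSubmonoid ℕ) (U : Finset ℕ) : Prop :=
  U ∈ Pfin0 S ∧ U ≠ {0} ∧
    ∀ B ∈ Pfin0 S, ∀ C ∈ Pfin0 S, U = B + C → B = {0} ∨ C = {0}

/-- The `n`-fold sumset `nA` of a finite set `A ⊆ ℕ` (with `0A = {0}`). -/
def nfold (A : Finset ℕ) : ℕ → Finset ℕ
  | 0 => {0}
  | n + 1 => nfold A n + A

section basics
variable {A : Finset ℕ}

lemma nfold_succ (n : ℕ) : nfold A (n+1) = nfold A n + A := rfl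

lemma nfold_zero : nfold A 0 = {0} := rfl

lemma zero_mem_nfold (h0 : 0 ∈ A) : ∀ n, (0:ℕ) ∈ nfold A n
  | 0 => by simp [nfold]
  | n + 1 => by
      rw [nfold_succ]
      exact Finset.mem_add.mpr ⟨0, zero_mem_nfold h0 n, 0, h0, rfl⟩

lemma nfold_add (m n : ℕ) : nfold A (m + n) = nfold A m + nfold A n := by
  induction n with
  | zero => rw [Nat.add_zero]; exact (add_zero (nfold A m)).symm
  | succ n ih => rw [← Nat.add_assoc, nfold_succ, nfold_succ, ih, add_assoc]

lemma nfold_mono (h0 : 0 ∈ A) {m n : ℕ} (h : m ≤ n) : nfold A m ⊆ nfold A n := by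
  obtain ⟨k, rfl⟩ := Nat.le.dest h
  rw [nfold_add]
  intro x hx
  exact Finset.mem_add.mpr ⟨x, hx, 0, zero_mem_nfold h0 k, by omega⟩

lemma nfold_le {a : ℕ} (hmax : ∀ x ∈ A, x ≤ a) : ∀ {n x}, x ∈ nfold A n → x ≤ n * a := by
  intro n
  induction n with
  | zero => intro x hx; simp [nfold_zero] at hx; omega
  | succ n ih =>
      intro x hx
      rw [nfold_succ] at hx
      obtain ⟨y, hy, z, hz, rfl⟩ := Finset.mem_add.mp hx
      have := ih hy; have := hmax z hz
      have : (n+1) * a = n*a + a := by ring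
      omega

lemma nfold_subset_closure : ∀ {n x}, x ∈ nfold A n → x ∈ AddSubmonoid.closure (A : Set ℕ) := by
  intro n
  induction n with
  | zero => intro x hx; simp [nfold_zero] at hx; exact hx ▸ AddSubmonoid.zero_mem _
  | succ n ih =>
      intro x hx
      obtain ⟨y, hy, z, hz, rfl⟩ := Finset.mem_add.mp hx
      exact AddSubmonoid.add_mem _ (ih hy) (AddSubmonoid.subset_closure hz)

lemma mem_nfold_self (h0 : 0 ∈ A) {y : ℕ}
    (hy : y ∈ AddSubmonoid.closure (A : Set ℕ)) : y ∈ nfold A y := by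
  induction hy using AddSubmonoid.closure_induction with
  | mem b hb =>
      rcases Nat.eq_zero_or_pos b with rfl | hb1
      · simp [nfold_zero]
      · have : b ∈ nfold A 1 := by
          rw [nfold_succ, nfold_zero]
          exact Finset.mem_add.mpr ⟨0, by simp, b, hb, by omega⟩
        exact nfold_mono h0 hb1 this
  | zero => simp [nfold_zero]
  | add x y _ _ hx hy =>
      rw [nfold_add]
      exact Finset.mem_add.mpr ⟨x, hx, y, hy, rfl⟩

lemma mul_mem_nfold {a : ℕ} (ha : a ∈ A) (h0 : 0 ∈ A) : ∀ j, j * a ∈ nfold A j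
  | 0 => by simp [nfold_zero]
  | j + 1 => by
      rw [nfold_succ]
      exact Finset.mem_add.mpr ⟨j * a, mul_mem_nfold ha h0 j, a, ha, by ring⟩

end basics

lemma middle {A : Finset ℕ} {a : ℕ} (h0 : 0 ∈ A) (ha : a ∈ A) (hapos : 0 < a) :
    ∃ K : ℕ, ∀ n y, y ∈ AddSubmonoid.closure (A : Set ℕ) → y + K ≤ n * a →
      y ∈ nfold A n := by
  classical
  have hmin : ∀ r, ∃ z, (∃ w, w ∈ AddSubmonoid.closure (A : Set ℕ) ∧ w % a = r) →
      (z ∈ AddSubmonoid.closure (A : Set ℕ) ∧ z % a = r ∧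
        ∀ w, w ∈ AddSubmonoid.closure (A : Set ℕ) → w % a = r → z ≤ w) := by
    intro r
    by_cases h : ∃ w, w ∈ AddSubmonoid.closure (A : Set ℕ) ∧ w % a = r
    · exact ⟨Nat.find h, fun _ => ⟨(Nat.find_spec h).1, (Nat.find_spec h).2,
        fun w hw hwr => Nat.find_min' h ⟨hw, hwr⟩⟩⟩
    · exact ⟨0, fun hc => absurd hc h⟩
  choose f hf using hmin
  set L := (Finset.range a).sup f with hLdef
  refine ⟨a * (L + 1), fun n y hyM hK => ?_⟩
  have hex : ∃ w, w ∈ AddSubmonoid.closure (A : Set ℕ) ∧ w % a = y % a := ⟨y, hyM, rfl⟩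
  obtain ⟨hzM, hzr, hzmin⟩ := hf (y % a) hex
  set z := f (y % a) with hzdef
  have hzL : z ≤ L := Finset.le_sup (Finset.mem_range.mpr (Nat.mod_lt _ hapos))
  have hzy : z ≤ y := hzmin y hyM rfl
  have hdvd : a ∣ y - z := (Nat.modEq_iff_dvd' hzy).mp hzr
  obtain ⟨j, hj⟩ := hdvd
  have hyj : y = z + a * j := by omega
  have hmem : y ∈ nfold A (z + j) := by
    rw [nfold_add]
    exact Finset.mem_add.mpr ⟨z, mem_nfold_self h0 hzM, j * a, mul_mem_nfold ha h0 j,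
      by rw [mul_comm j a]; omega⟩
  have h1 : a * (j + L + 1) ≤ a * n := by
    calc a * (j + L + 1) = a * j + a * L + a := by ring
    _ ≤ y + a * L + a := by omega
    _ ≤ y + a * (L + 1) := by ring_nf; omega
    _ ≤ n * a := hK
    _ = a * n := by ring
  have h2 : j + L + 1 ≤ n := Nat.le_of_mul_le_mul_left h1 hapos
  exact nfold_mono h0 (by omega) hmem

lemma stab (f : ℕ → Finset ℕ) (B n₂ : ℕ) (mono : ∀ n, n₂ ≤ n → f n ⊆ f (n+1))
    (bdd : ∀ n, (f n).card ≤ B) : ∃ N, n₂ ≤ N ∧ ∀ n, N ≤ n → f n = f N := by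
  have chain : ∀ m n, n₂ ≤ m → m ≤ n → f m ⊆ f n := by
    intro m n hm hmn
    induction n, hmn using Nat.le_induction with
    | base => exact subset_rfl
    | succ n hn ih => exact ih.trans (mono n (hm.trans hn))
  set V : Set ℕ := {c | ∃ n, n₂ ≤ n ∧ (f n).card = c} with hV
  have hVne : V.Nonempty := ⟨(f n₂).card, n₂, le_rfl, rfl⟩
  have hVbdd : BddAbove V := ⟨B, fun c ⟨n, _, hc⟩ => hc ▸ bdd n⟩
  obtain ⟨N, hN, hNc⟩ := Nat.sSup_mem hVne hVbdd
  refine ⟨N, hN, fun n hn => ?_⟩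
  have h1 : f N ⊆ f n := chain N n hN hn
  have h2 : (f n).card ≤ (f N).card := by
    rw [hNc]
    exact le_csSup hVbdd ⟨n, hN.trans hn, rfl⟩
  exact (Finset.eq_of_subset_of_card_le h1 h2).symm

lemma L2 {A : Finset ℕ} {a : ℕ} (h0 : 0 ∈ A) (ha : a ∈ A) (hapos : 0 < a)
    (hmax : ∀ x ∈ A, x ≤ a) :
    ∃ n, ({0, 2*a} : Finset ℕ) + nfold A n = nfold A (n + 2) := by
  obtain ⟨K, hK⟩ := middle h0 ha hapos
  set W := K + 2*a + 1 with hW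
  set T : ℕ → Finset ℕ :=
    fun n => (Finset.range (W+1)).filter (fun t => n*a - t ∈ nfold A n) with hT
  have hmono : ∀ n, W ≤ n → T n ⊆ T (n+1) := by
    intro n hn t ht
    rw [hT, Finset.mem_filter, Finset.mem_range] at ht ⊢
    obtain ⟨htW, htm⟩ := ht
    have hna : n ≤ n * a := Nat.le_mul_of_pos_right n hapos
    have heq : (n+1)*a = n*a + a := by ring
    refine ⟨htW, ?_⟩
    have : (n*a - t) + a ∈ nfold A (n+1) := by
      rw [nfold_succ]
      exact Finset.add_mem_add htm ha
    have heq2 : (n+1)*a - t = (n*a - t) + a := by omega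
    rwa [heq2]
  have hbdd : ∀ n, (T n).card ≤ W + 1 := by
    intro n
    calc (T n).card ≤ (Finset.range (W+1)).card := Finset.card_le_card (Finset.filter_subset _ _)
    _ = W + 1 := Finset.card_range _
  obtain ⟨N, hNW, hNstab⟩ := stab T (W+1) W hmono hbdd
  refine ⟨N, ?_⟩
  apply Finset.Subset.antisymm
  · -- {0,2a} + nfold A N ⊆ nfold A (N+2)
    intro x hx
    obtain ⟨b, hb, y, hy, rfl⟩ := Finset.mem_add.mp hx
    simp only [Finset.mem_insert, Finset.mem_singleton] at hb
    rcases hb with rfl | rfl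
    · rw [zero_add]
      exact nfold_mono h0 (by omega) hy
    · have h1 : y + a ∈ nfold A (N+1) := by
        rw [nfold_succ]; exact Finset.add_mem_add hy ha
      have h2 : (y + a) + a ∈ nfold A (N+2) := by
        rw [nfold_succ]; exact Finset.add_mem_add h1 ha
      have : 2*a + y = (y + a) + a := by ring
      rwa [this]
  · intro x hx
    have hxle : x ≤ (N+2) * a := nfold_le hmax hx
    have hNa : N ≤ N * a := Nat.le_mul_of_pos_right N hapos
    have heq : (N+2)*a = N*a + 2*a := by ring
    by_cases hc : x + K ≤ N * a
    · have hxM := nfold_subset_closure hx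
      have : x ∈ nfold A N := hK N x hxM hc
      exact Finset.mem_add.mpr ⟨0, by simp, x, this, zero_add x⟩
    · set t := (N+2)*a - x with htdef
      have hxt : x + t = (N+2)*a := by omega
      have htW : t < W + 1 := by omega
      have htmem : t ∈ T (N+2) := by
        rw [hT, Finset.mem_filter, Finset.mem_range]
        have : (N+2)*a - t = x := by omega
        exact ⟨htW, by rwa [this]⟩
      have hTeq : T (N+2) = T N := hNstab (N+2) (by omega)
      rw [hTeq, hT, Finset.mem_filter] at htmem
      have hyN : N*a - t ∈ nfold A N := htmem.2
      have hxeq : x = 2*a + (N*a - t) := by omega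
      rw [hxeq]
      exact Finset.mem_add.mpr ⟨2*a, by simp, N*a - t, hyN, rfl⟩


lemma Pfin0_add {S : AddSubmonoid ℕ} {B C : Finset ℕ} (hB : B ∈ Pfin0 S)
    (hC : C ∈ Pfin0 S) : B + C ∈ Pfin0 S := by
  refine ⟨Finset.mem_add.mpr ⟨0, hB.1, 0, hC.1, rfl⟩, ?_⟩
  intro x hx
  obtain ⟨b, hb, c, hc, rfl⟩ := Finset.mem_add.mp hx
  exact S.add_mem (hB.2 hb) (hC.2 hc)

lemma nfold_mem_Pfin0 {S : AddSubmonoid ℕ} {A : Finset ℕ} (hA : A ∈ Pfin0 S) :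
    ∀ n, nfold A n ∈ Pfin0 S
  | 0 => ⟨by simp [nfold_zero], by
      intro x hx
      simp [nfold_zero] at hx
      simpa [hx] using S.zero_mem⟩
  | n + 1 => Pfin0_add (nfold_mem_Pfin0 hA n) hA

lemma supAdd {B C : Finset ℕ} (hB : 0 ∈ B) (hC : 0 ∈ C) :
    (B + C).sup id = B.sup id + C.sup id := by
  apply le_antisymm
  · apply Finset.sup_le
    intro x hx
    obtain ⟨b, hb, c, hc, rfl⟩ := Finset.mem_add.mp hx
    exact add_le_add (Finset.le_sup (f := id) hb) (Finset.le_sup (f := id) hc)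
  · obtain ⟨b, hb, hbs⟩ := Finset.exists_mem_eq_sup B ⟨0, hB⟩ id
    obtain ⟨c, hc, hcs⟩ := Finset.exists_mem_eq_sup C ⟨0, hC⟩ id
    rw [hbs, hcs]
    exact Finset.le_sup (f := id) (Finset.add_mem_add hb hc)

lemma nonzero_of_ne_singleton {B : Finset ℕ} (h0 : 0 ∈ B) (h : B ≠ {0}) :
    ∃ b ∈ B, b ≠ 0 := by
  by_contra hc
  push_neg at hc
  exact h (Finset.eq_singleton_iff_unique_mem.mpr ⟨h0, fun x hx => hc x hx⟩)

lemma pair_atom {S : AddSubmonoid ℕ} {x : ℕ} (hx : x ∈ S) (hx0 : x ≠ 0) :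
    IsAtom0 S ({0, x} : Finset ℕ) := by
  refine ⟨⟨by simp, ?_⟩, ?_, ?_⟩
  · intro y hy
    simp only [Finset.coe_insert, Finset.coe_singleton, Set.mem_insert_iff,
      Set.mem_singleton_iff] at hy
    rcases hy with rfl | rfl
    · exact S.zero_mem
    · exact hx
  · intro h
    have : x ∈ ({0} : Finset ℕ) := h ▸ (by simp : x ∈ ({0, x} : Finset ℕ))
    simp at this
    exact hx0 this
  · intro B hB C hC hBC
    have hBsub : B ⊆ {0, x} := by
      intro b hb
      rw [hBC]
      have : b + 0 ∈ B + C := Finset.add_mem_add hb hC.1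
      simpa using this
    have hCsub : C ⊆ {0, x} := by
      intro c hc
      rw [hBC]
      have : 0 + c ∈ B + C := Finset.add_mem_add hB.1 hc
      simpa using this
    by_cases hB0 : B = {0}
    · exact Or.inl hB0
    · right
      obtain ⟨b, hb, hbne⟩ := nonzero_of_ne_singleton hB.1 hB0
      have hbx : b = x := by
        have := hBsub hb
        simp only [Finset.mem_insert, Finset.mem_singleton] at this
        tauto
      apply Finset.eq_singleton_iff_unique_mem.mpr
      refine ⟨hC.1, fun c hc => ?_⟩
      by_contra hcne
      have hcx : c = x := by
        have := hCsub hc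
        simp only [Finset.mem_insert, Finset.mem_singleton] at this
        tauto
      have : b + c ∈ B + C := Finset.add_mem_add hb hc
      rw [← hBC] at this
      simp only [Finset.mem_insert, Finset.mem_singleton, hbx, hcx] at this
      omega

lemma atomic {S : AddSubmonoid ℕ} :
    ∀ v (U : Finset ℕ), U ∈ Pfin0 S → U.sup id ≤ v →
      ∃ ms : Multiset (Finset ℕ), (∀ V ∈ ms, IsAtom0 S V) ∧ ms.sum = U := by
  intro v
  induction v using Nat.strong_induction_on with
  | _ v ih =>
    intro U hU hUv
    by_cases hU0 : U = {0}
    · exact ⟨0, by simp, by simp [hU0]; rfl⟩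
    · by_cases hAt : IsAtom0 S U
      · exact ⟨{U}, by simpa using hAt, by simp⟩
      · rw [IsAtom0] at hAt
        push_neg at hAt
        obtain ⟨B, hB, C, hC, hBC, hBne, hCne⟩ := hAt hU hU0
        obtain ⟨b, hb, hbne⟩ := nonzero_of_ne_singleton hB.1 hBne
        obtain ⟨c, hc, hcne⟩ := nonzero_of_ne_singleton hC.1 hCne
        have hsup : B.sup id + C.sup id = U.sup id := by rw [hBC, supAdd hB.1 hC.1]
        have hBpos : 0 < B.sup id := lt_of_lt_of_le (Nat.pos_of_ne_zero hbne) (Finset.le_sup (f := id) hb)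
        have hCpos : 0 < C.sup id := lt_of_lt_of_le (Nat.pos_of_ne_zero hcne) (Finset.le_sup (f := id) hc)
        have hBlt : B.sup id < v := by omega
        have hClt : C.sup id < v := by omega
        obtain ⟨msB, hmsB, hmsBsum⟩ := ih _ hBlt B hB le_rfl
        obtain ⟨msC, hmsC, hmsCsum⟩ := ih _ hClt C hC le_rfl
        refine ⟨msB + msC, ?_, ?_⟩
        · intro V hV
          rcases Multiset.mem_add.mp hV with h | h
          · exact hmsB V h
          · exact hmsC V h
        · rw [Multiset.sum_add, hmsBsum, hmsCsum, hBC]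


/-- `P_fin,0(S)` has no absolutely irreducible elements: for every atom `A` some
power `NA` has a factorization into atoms which is not `N` copies of `A`. -/
theorem no_absolutely_irreducible (S : AddSubmonoid ℕ)
    (hfin : ((S : Set ℕ)ᶜ).Finite) (A : Finset ℕ) (hA : IsAtom0 S A) :
    ∃ N : ℕ, ∃ m : Multiset (Finset ℕ),
      (∀ U ∈ m, IsAtom0 S U) ∧ m.sum = nfold A N ∧
      m ≠ Multiset.replicate N A := by
  have h0A : 0 ∈ A := hA.1.1
  have hAS : (A : Set ℕ) ⊆ (S : Set ℕ) := hA.1.2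
  have hne : A ≠ {0} := hA.2.1
  have hAne : A.Nonempty := ⟨0, h0A⟩
  set a := A.max' hAne with hadef
  have ha_mem : a ∈ A := A.max'_mem hAne
  have hmax : ∀ x ∈ A, x ≤ a := fun x hx => A.le_max' x hx
  have hapos : 0 < a := by
    obtain ⟨u, hu, hune⟩ := nonzero_of_ne_singleton h0A hne
    exact lt_of_lt_of_le (Nat.pos_of_ne_zero hune) (hmax u hu)
  obtain ⟨n, hn⟩ := L2 h0A ha_mem hapos hmax
  obtain ⟨ms, hms, hsum⟩ := atomic ((nfold A n).sup id) (nfold A n)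
    (nfold_mem_Pfin0 hA.1 n) le_rfl
  refine ⟨n + 2, ({0, 2*a} : Finset ℕ) ::ₘ ms, ?_, ?_, ?_⟩
  · intro U hU
    rcases Multiset.mem_cons.mp hU with rfl | h
    · have haS : a ∈ S := hAS (Finset.mem_coe.mpr ha_mem)
      have h2aS : 2 * a ∈ S := by
        have := S.add_mem haS haS
        rwa [← two_mul] at this
      exact pair_atom h2aS (by omega)
    · exact hms U h
  · rw [Multiset.sum_cons, hsum, hn]
  · intro hEq
    have hmem : ({0, 2*a} : Finset ℕ) ∈ Multiset.replicate (n+2) A :=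
      hEq ▸ Multiset.mem_cons_self _ _
    have h2 : ({0, 2*a} : Finset ℕ) = A := Multiset.eq_of_mem_replicate hmem
    have h3 : 2*a ∈ A := h2 ▸ (by simp : 2*a ∈ ({0, 2*a} : Finset ℕ))
    have := hmax _ h3
    omega
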